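/- Let G = T × F be a finitely generated abelian group where T is a finite subgroup and F is torsion-free, and let π : G → F be the projection. For finite nonempty multisets A, B over G, if π(A) = π(B) (images as multisets), then A + T = B + T, where T is regarded as the multiset of its elements. In particular, A can be catalytically transformed to B with catalyst T. -/

import Mathlib

/-- Pairwise sum of multisets over an additive group. -/
def pSum {G : Type*} [AddCommGroup G] (A B : Multiset G) : Multiset G :=
  (A.product B).map fun p => p.1 + p.2

lemma pSum_T_eq {T F : Type*} [AddCommGroup T] [Fintype T] [DecidableEq T]
    [AddCommGroup F] (A : Multiset (T × F)) :
    pSum A ((Finset.univ.val : Multiset T).map fun t => ((t, 0) : T × F)) =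
      (A.map Prod.snd).bind fun f => (Finset.univ.val : Multiset T).map fun t => (t, f) := by
  unfold pSum
  rw [Multiset.product, Multiset.bind_map, Multiset.map_bind]
  congr 1
  funext a
  rw [Multiset.map_map, Multiset.map_map]
  show (Finset.univ.val : Multiset T).map (fun t => a + (t, 0)) = _
  have key : (Finset.univ.val : Multiset T).map (fun t => a.1 + t) = Finset.univ.val := by
    have := Finset.map_univ_equiv (Equiv.addLeft a.1)
    calc (Finset.univ.val : Multiset T).map (fun t => a.1 + t)
        = (Finset.univ.map (Equiv.addLeft a.1).toEmbedding).val := rfl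
      _ = (Finset.univ : Finset T).val := by rw [this]
  calc (Finset.univ.val : Multiset T).map (fun t => a + (t, 0))
      = ((Finset.univ.val : Multiset T).map (fun t => a.1 + t)).map (fun t => (t, a.2)) := by
        rw [Multiset.map_map]
        apply Multiset.map_congr rfl
        intro t _
        simp [Prod.ext_iff]
    _ = _ := by rw [key]

theorem equal_projections_imply_catalysis {T F : Type*}
    [AddCommGroup T] [Fintype T] [DecidableEq T]
    [AddCommGroup F] (hF : ∀ g : F, g ≠ 0 → ¬IsOfFinAddOrder g)
    (hfg : AddGroup.FG (T × F))
    (A B : Multiset (T × F)) (hA : A ≠ 0) (hB : B ≠ 0)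
    (h : A.map Prod.snd = B.map Prod.snd) :
    pSum A ((Finset.univ.val : Multiset T).map fun t => ((t, 0) : T × F)) =
      pSum B ((Finset.univ.val : Multiset T).map fun t => ((t, 0) : T × F)) := by
  rw [pSum_T_eq, pSum_T_eq, h]
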